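/- Let (s(n)) be a sequence of real numbers, (B(n)) a sequence of linear maps on ℝ², and ζ(n) = (s(n), s(n−1)) ∈ ℝ². Suppose there are constants C > 0, N ∈ ℕ, and 0 < λ < 1 so that ‖ζ(n+1) − B(n)ζ(n)‖ ≤ C for all n, ‖B(n)‖ ≤ 2 for all n (operator norm), and every composition B(n+N) ∘ ⋯ ∘ B(n) of N+1 consecutive maps has operator norm at most λ. Then the sequence (‖ζ(n)‖) is bounded. -/
import Mathlib


theorem stmt_8 (s : ℕ → ℝ)
    (ζ : ℕ → EuclideanSpace ℝ (Fin 2))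
    (hζ : ∀ n, ζ n 0 = s n ∧ ζ n 1 = s (n - 1))
    (B : ℕ → (EuclideanSpace ℝ (Fin 2) →L[ℝ] EuclideanSpace ℝ (Fin 2)))
    (C : ℝ) (hC : 0 < C)
    (hrec : ∀ n, ‖ζ (n + 1) - B n (ζ n)‖ ≤ C)
    (hBnorm : ∀ n, ‖B n‖ ≤ 2)
    (N : ℕ) (lam : ℝ) (hlam0 : 0 < lam) (hlam1 : lam < 1)
    (hcontr : ∀ n, ‖(((List.range (N + 1)).map fun k => B (n + N - k)).prod)‖ ≤ lam) :
    ∃ M : ℝ, ∀ n, ‖ζ n‖ ≤ M := by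
  -- Q m n = B(n+m-1) ∘ ⋯ ∘ B(n)
  set Q : ℕ → ℕ → (EuclideanSpace ℝ (Fin 2) →L[ℝ] EuclideanSpace ℝ (Fin 2)) :=
    fun m n => (((List.range m).map fun k => B (n + m - 1 - k)).prod) with hQ
  have hQsucc : ∀ m n, Q (m + 1) n = B (n + m) * Q m n := by
    intro m n
    simp only [hQ, List.range_succ_eq_map, List.map_cons, List.map_map, List.prod_cons]
    have e1 : n + (m + 1) - 1 - 0 = n + m := by omega
    rw [e1]
    congr 1
    refine congrArg List.prod (List.map_congr_left ?_)
    intro k _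
    simp only [Function.comp, Nat.succ_eq_add_one]
    congr 1
    omega
  have key : ∀ m n, ‖ζ (n + m) - Q m n (ζ n)‖ ≤ C * (2 ^ m - 1) := by
    intro m
    induction m with
    | zero => intro n; simp [hQ]
    | succ m ih =>
      intro n
      have h1 : ζ (n + (m + 1)) - Q (m + 1) n (ζ n)
          = (ζ (n + m + 1) - B (n + m) (ζ (n + m)))
            + B (n + m) (ζ (n + m) - Q m n (ζ n)) := by
        rw [hQsucc]
        simp only [map_sub, ContinuousLinearMap.mul_apply]
        abel
      rw [h1]
      have h2 := norm_add_le (ζ (n + m + 1) - B (n + m) (ζ (n + m)))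
        (B (n + m) (ζ (n + m) - Q m n (ζ n)))
      have h3 := (B (n + m)).le_opNorm (ζ (n + m) - Q m n (ζ n))
      have h4 := hrec (n + m)
      have h5 := hBnorm (n + m)
      have h6 := ih n
      have hz : (0:ℝ) ≤ ‖ζ (n + m) - Q m n (ζ n)‖ := norm_nonneg _
      have h7 : ‖B (n + m) (ζ (n + m) - Q m n (ζ n))‖ ≤ 2 * (C * (2 ^ m - 1)) := by
        calc ‖B (n + m) (ζ (n + m) - Q m n (ζ n))‖
            ≤ ‖B (n + m)‖ * ‖ζ (n + m) - Q m n (ζ n)‖ := h3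
          _ ≤ 2 * (C * (2 ^ m - 1)) := by
              apply mul_le_mul h5 h6 hz (by norm_num)
      have : (C : ℝ) + 2 * (C * (2 ^ m - 1)) = C * (2 ^ (m + 1) - 1) := by ring
      linarith
  -- contraction over a block of length N+1
  set D : ℝ := C * 2 ^ (N + 1) with hD
  have hD0 : 0 < D := by positivity
  have block : ∀ n, ‖ζ (n + (N + 1))‖ ≤ lam * ‖ζ n‖ + D := by
    intro n
    have h1 := key (N + 1) n
    have h2 : ‖Q (N + 1) n (ζ n)‖ ≤ lam * ‖ζ n‖ := by
      calc ‖Q (N + 1) n (ζ n)‖ ≤ ‖Q (N + 1) n‖ * ‖ζ n‖ := (Q (N + 1) n).le_opNorm _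
        _ ≤ lam * ‖ζ n‖ := by
            apply mul_le_mul_of_nonneg_right _ (norm_nonneg _)
            have : Q (N + 1) n = (((List.range (N + 1)).map fun k => B (n + N - k)).prod) := by
              simp only [hQ]
              refine congrArg List.prod (List.map_congr_left ?_)
              intro k _
              congr 1
            rw [this]; exact hcontr n
    calc ‖ζ (n + (N + 1))‖
        ≤ ‖Q (N + 1) n (ζ n)‖ + ‖ζ (n + (N + 1)) - Q (N + 1) n (ζ n)‖ := by
          have := norm_add_le (Q (N + 1) n (ζ n)) (ζ (n + (N + 1)) - Q (N + 1) n (ζ n))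
          simpa using this
      _ ≤ lam * ‖ζ n‖ + C * (2 ^ (N + 1) - 1) := add_le_add h2 h1
      _ ≤ lam * ‖ζ n‖ + D := by rw [hD]; nlinarith
  -- initial bound
  set M0 : ℝ := (Finset.range (N + 1)).sup' (by simp) (fun i => ‖ζ i‖) with hM0
  have hM0nn : 0 ≤ M0 := le_trans (norm_nonneg (ζ 0))
    (Finset.le_sup' (fun i => ‖ζ i‖) (by simp : 0 ∈ Finset.range (N + 1)))
  set K : ℝ := D / (1 - lam) with hK
  have hKeq : (1 - lam) * K = D := by
    have h1 : (1:ℝ) - lam ≠ 0 := by linarith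
    rw [hK, mul_comm, div_mul_cancel₀ _ h1]
  have hKnn : 0 ≤ K := by
    rw [hK]; exact div_nonneg hD0.le (by linarith)
  refine ⟨M0 + K, ?_⟩
  intro n
  induction n using Nat.strong_induction_on with
  | _ n ih =>
    by_cases h : n < N + 1
    · have : ‖ζ n‖ ≤ M0 := Finset.le_sup' (fun i => ‖ζ i‖) (Finset.mem_range.mpr h)
      linarith
    · push_neg at h
      have hn : n = (n - (N + 1)) + (N + 1) := by omega
      have hb := block (n - (N + 1))
      rw [← hn] at hb
      have hih := ih (n - (N + 1)) (by omega)
      have hlM0 : lam * M0 ≤ M0 := by nlinarith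
      have : lam * ‖ζ (n - (N + 1))‖ ≤ lam * (M0 + K) :=
        mul_le_mul_of_nonneg_left hih (le_of_lt hlam0)
      nlinarith
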